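/- Combined multiplier identity (equation (11) of the proof of Theorem 2): Let x(·), u(·), ψ(·), λ(·) be differentiable on [a,b], ψ₀ ∈ ℝ, and let (T, X, U) be a C²-smooth one-parameter family with (T,X,U)(t,x,u,0) = (t,x,u). Suppose the three invariance conditions hold along (x(·),u(·)): L = (L∘hˢ)·(d/dt)T, (d/dt)X = (φ∘hˢ)·(d/dt)T, and ϕ = (ϕ∘hˢ)·(d/dt)T for all s ∈ (−ε,ε), t ∈ [a,b]. Then for all t ∈ [a,b]: ψ₀·[(∂L/∂t)·a + ⟨∂L/∂x, b⟩ + ⟨∂L/∂u, c⟩ + L·ȧ] + ⟨ψ(t), (∂φ/∂t)·a + (∂φ/∂x)·b + (∂φ/∂u)·c + φ·ȧ − ḃ⟩ + ⟨λ(t), (∂ϕ/∂t)·a + (∂ϕ/∂x)·b + (∂ϕ/∂u)·c + ϕ·ȧ⟩ = 0, where a = (∂T/∂s)|_{s=0}, b = (∂X/∂s)|_{s=0}, c = (∂U/∂s)|_{s=0} evaluated at (t,x(t),u(t),0), ȧ and ḃ are their total time derivatives, and the partial derivatives of L, φ, ϕ are evaluated at (t,x(t),u(t)). -/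

import Mathlib

open Set RealInnerProductSpace

@[reducible] def PS (n r : ℕ) := ℝ × EuclideanSpace ℝ (Fin n) × EuclideanSpace ℝ (Fin r)

lemma aux_comp_curve {Q F : Type*} [NormedAddCommGroup Q] [NormedSpace ℝ Q]
    [NormedAddCommGroup F] [NormedSpace ℝ F]
    {T : Q → F} (hT : Differentiable ℝ T)
    {γ : ℝ → Q} {v : Q} {t : ℝ} (hγ : HasDerivAt γ v t) :
    HasDerivAt (fun τ => T (γ τ)) (fderiv ℝ T (γ t) v) t :=
  (hT _).hasFDerivAt.comp_hasDerivAt t hγ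

lemma aux_fderiv_apply_curve {Q F : Type*} [NormedAddCommGroup Q] [NormedSpace ℝ Q]
    [NormedAddCommGroup F] [NormedSpace ℝ F]
    {T : Q → F} (hT : ContDiff ℝ 2 T)
    {γ : ℝ → Q} {v : Q} {t : ℝ} (hγ : HasDerivAt γ v t) (w : Q) :
    HasDerivAt (fun τ => fderiv ℝ T (γ τ) w)
      (fderiv ℝ (fderiv ℝ T) (γ t) v w) t := by
  have hg : Differentiable ℝ (fderiv ℝ T) :=
    (hT.fderiv_right (m := 1) (by norm_num)).differentiable one_ne_zero
  have h1 : HasFDerivAt (fun q => fderiv ℝ T q w)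
      ((ContinuousLinearMap.apply ℝ F w).comp (fderiv ℝ (fderiv ℝ T) (γ t))) (γ t) :=
    (ContinuousLinearMap.apply ℝ F w).hasFDerivAt.comp _ (hg _).hasFDerivAt
  exact h1.comp_hasDerivAt t hγ


/-- **Combined multiplier identity** (equation (11) of the proof of Theorem 2).
If the three invariance conditions hold along `(x(·),u(·))`, then multiplying
the differentiated identities by `ψ₀`, `ψ(t)`, `λ(t)` and adding yields, with
`a = ∂T/∂s|₀`, `b = ∂X/∂s|₀`, `c = ∂U/∂s|₀`:
`ψ₀·[(∂L/∂t)·a + ⟨∂L/∂x, b⟩ + ⟨∂L/∂u, c⟩ + L·ȧ]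
 + ⟨ψ, (∂φ/∂t)·a + (∂φ/∂x)·b + (∂φ/∂u)·c + φ·ȧ − ḃ⟩
 + ⟨λ, (∂ϕ/∂t)·a + (∂ϕ/∂x)·b + (∂ϕ/∂u)·c + ϕ·ȧ⟩ = 0`. -/
theorem combined_multiplier_identity
    {n r m : ℕ}
    (L : ℝ × EuclideanSpace ℝ (Fin n) × EuclideanSpace ℝ (Fin r) → ℝ)
    (φ : ℝ × EuclideanSpace ℝ (Fin n) × EuclideanSpace ℝ (Fin r) → EuclideanSpace ℝ (Fin n))
    (ϕ : ℝ × EuclideanSpace ℝ (Fin n) × EuclideanSpace ℝ (Fin r) → EuclideanSpace ℝ (Fin m))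
    (hL : ContDiff ℝ 1 L) (hφ : ContDiff ℝ 1 φ) (hϕ : ContDiff ℝ 1 ϕ)
    (a b : ℝ) (hab : a < b)
    (x : ℝ → EuclideanSpace ℝ (Fin n)) (u : ℝ → EuclideanSpace ℝ (Fin r))
    (ψ₀ : ℝ) (ψ : ℝ → EuclideanSpace ℝ (Fin n)) (lam : ℝ → EuclideanSpace ℝ (Fin m))
    (hx : ∀ t ∈ Icc a b, DifferentiableAt ℝ x t)
    (hu : ∀ t ∈ Icc a b, DifferentiableAt ℝ u t)
    (hψ : ∀ t ∈ Icc a b, DifferentiableAt ℝ ψ t)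
    (hlam : ∀ t ∈ Icc a b, DifferentiableAt ℝ lam t)
    (ε : ℝ) (hε : 0 < ε)
    (T : (ℝ × EuclideanSpace ℝ (Fin n) × EuclideanSpace ℝ (Fin r)) × ℝ → ℝ)
    (X : (ℝ × EuclideanSpace ℝ (Fin n) × EuclideanSpace ℝ (Fin r)) × ℝ →
        EuclideanSpace ℝ (Fin n))
    (U : (ℝ × EuclideanSpace ℝ (Fin n) × EuclideanSpace ℝ (Fin r)) × ℝ →
        EuclideanSpace ℝ (Fin r))
    (hT : ContDiff ℝ 2 T) (hX : ContDiff ℝ 2 X) (hU : ContDiff ℝ 2 U)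
    (hT0 : ∀ p : ℝ × EuclideanSpace ℝ (Fin n) × EuclideanSpace ℝ (Fin r), T (p, 0) = p.1)
    (hX0 : ∀ p : ℝ × EuclideanSpace ℝ (Fin n) × EuclideanSpace ℝ (Fin r), X (p, 0) = p.2.1)
    (hU0 : ∀ p : ℝ × EuclideanSpace ℝ (Fin n) × EuclideanSpace ℝ (Fin r), U (p, 0) = p.2.2)
    -- the three invariance conditions along (x(·), u(·))
    (hinvL : ∀ s ∈ Ioo (-ε) ε, ∀ t ∈ Icc a b,
      L (t, x t, u t) =
        L (T ((t, x t, u t), s), X ((t, x t, u t), s), U ((t, x t, u t), s)) *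
          deriv (fun τ => T ((τ, x τ, u τ), s)) t)
    (hinvφ : ∀ s ∈ Ioo (-ε) ε, ∀ t ∈ Icc a b,
      deriv (fun τ => X ((τ, x τ, u τ), s)) t =
        (deriv (fun τ => T ((τ, x τ, u τ), s)) t) •
          φ (T ((t, x t, u t), s), X ((t, x t, u t), s), U ((t, x t, u t), s)))
    (hinvϕ : ∀ s ∈ Ioo (-ε) ε, ∀ t ∈ Icc a b,
      ϕ (t, x t, u t) =
        (deriv (fun τ => T ((τ, x τ, u τ), s)) t) •
          ϕ (T ((t, x t, u t), s), X ((t, x t, u t), s), U ((t, x t, u t), s))) :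
    ∀ t ∈ Icc a b,
      ψ₀ * (fderiv ℝ L (t, x t, u t)
              (deriv (fun s => T ((t, x t, u t), s)) 0, 0, 0)
            + fderiv ℝ L (t, x t, u t)
              (0, deriv (fun s => X ((t, x t, u t), s)) 0, 0)
            + fderiv ℝ L (t, x t, u t)
              (0, 0, deriv (fun s => U ((t, x t, u t), s)) 0)
            + L (t, x t, u t) *
                deriv (fun τ => deriv (fun s => T ((τ, x τ, u τ), s)) 0) t)
      + ⟪ψ t,
          fderiv ℝ φ (t, x t, u t)
              (deriv (fun s => T ((t, x t, u t), s)) 0, 0, 0)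
            + fderiv ℝ φ (t, x t, u t)
              (0, deriv (fun s => X ((t, x t, u t), s)) 0, 0)
            + fderiv ℝ φ (t, x t, u t)
              (0, 0, deriv (fun s => U ((t, x t, u t), s)) 0)
            + (deriv (fun τ => deriv (fun s => T ((τ, x τ, u τ), s)) 0) t) •
                φ (t, x t, u t)
            - deriv (fun τ => deriv (fun s => X ((τ, x τ, u τ), s)) 0) t⟫
      + ⟪lam t,
          fderiv ℝ ϕ (t, x t, u t)
              (deriv (fun s => T ((t, x t, u t), s)) 0, 0, 0)
            + fderiv ℝ ϕ (t, x t, u t)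
              (0, deriv (fun s => X ((t, x t, u t), s)) 0, 0)
            + fderiv ℝ ϕ (t, x t, u t)
              (0, 0, deriv (fun s => U ((t, x t, u t), s)) 0)
            + (deriv (fun τ => deriv (fun s => T ((τ, x τ, u τ), s)) 0) t) •
                ϕ (t, x t, u t)⟫ = 0 := by
  intro t ht
  have hTd : Differentiable ℝ T := hT.differentiable (by norm_num)
  have hXd : Differentiable ℝ X := hX.differentiable (by norm_num)
  have hUd : Differentiable ℝ U := hU.differentiable (by norm_num)
  -- the curve τ ↦ (τ, x τ, u τ), differentiable at every point of Icc a b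
  have hγ : ∀ τ ∈ Icc a b, HasDerivAt (fun τ => ((τ, x τ, u τ) : PS n r))
      ((1 : ℝ), deriv x τ, deriv u τ) τ := fun τ hτ =>
    (hasDerivAt_id τ).prodMk (((hx τ hτ).hasDerivAt).prodMk ((hu τ hτ).hasDerivAt))
  set v : PS n r := ((1 : ℝ), deriv x t, deriv u t) with hv
  set q : PS n r := (t, x t, u t) with hqdef
  -- vertical curve s ↦ (p, s)
  have hvert : ∀ (p : PS n r) (s₀ : ℝ), HasDerivAt (fun s => ((p, s) : PS n r × ℝ))
      ((0 : PS n r), (1 : ℝ)) s₀ := fun p s₀ => (hasDerivAt_const s₀ p).prodMk (hasDerivAt_id s₀)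
  -- first s-derivatives at 0
  have haA : HasDerivAt (fun s => T (q, s)) (fderiv ℝ T (q, 0) ((0 : PS n r), (1:ℝ))) 0 :=
    aux_comp_curve hTd (hvert q 0)
  have haB : HasDerivAt (fun s => X (q, s)) (fderiv ℝ X (q, 0) ((0 : PS n r), (1:ℝ))) 0 :=
    aux_comp_curve hXd (hvert q 0)
  have haC : HasDerivAt (fun s => U (q, s)) (fderiv ℝ U (q, 0) ((0 : PS n r), (1:ℝ))) 0 :=
    aux_comp_curve hUd (hvert q 0)
  set a₀ := fderiv ℝ T (q, 0) ((0 : PS n r), (1:ℝ)) with ha₀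
  set b₀ := fderiv ℝ X (q, 0) ((0 : PS n r), (1:ℝ)) with hb₀
  set c₀ := fderiv ℝ U (q, 0) ((0 : PS n r), (1:ℝ)) with hc₀
  have hda : deriv (fun s => T (q, s)) 0 = a₀ := haA.deriv
  have hdb : deriv (fun s => X (q, s)) 0 = b₀ := haB.deriv
  have hdc : deriv (fun s => U (q, s)) 0 = c₀ := haC.deriv
  -- the horizontal curves τ ↦ ((τ, x τ, u τ), s)
  have hhor : ∀ s : ℝ, ∀ τ ∈ Icc a b, HasDerivAt (fun τ => (((τ, x τ, u τ) : PS n r), s))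
      (((1 : ℝ), deriv x τ, deriv u τ), (0:ℝ)) τ := fun s τ hτ =>
    (hγ τ hτ).prodMk (hasDerivAt_const τ s)
  -- τ-derivatives along the curve, as functions of s
  have hderivT : ∀ s : ℝ, deriv (fun τ => T ((τ, x τ, u τ), s)) t
      = fderiv ℝ T (q, s) (v, (0:ℝ)) := fun s =>
    (aux_comp_curve hTd (hhor s t ht)).deriv
  have hderivX : ∀ s : ℝ, deriv (fun τ => X ((τ, x τ, u τ), s)) t
      = fderiv ℝ X (q, s) (v, (0:ℝ)) := fun s =>
    (aux_comp_curve hXd (hhor s t ht)).deriv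
  -- value at s = 0 of the T-τ-derivative is 1
  have hA01 : fderiv ℝ T (q, 0) (v, (0:ℝ)) = 1 := by
    have h1 : HasDerivAt (fun τ => T (((τ, x τ, u τ) : PS n r), 0))
        (fderiv ℝ T (q, 0) (v, (0:ℝ))) t := aux_comp_curve hTd (hhor 0 t ht)
    have h2 : (fun τ => T (((τ, x τ, u τ) : PS n r), 0)) = fun τ => τ := by
      funext τ; exact hT0 _
    rw [h2] at h1
    exact h1.unique (hasDerivAt_id t)
  -- mixed second derivatives
  have hsymT := (hT.contDiffAt (x := (q, 0))).isSymmSndFDerivAt (by norm_num)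
  have hsymX := (hX.contDiffAt (x := (q, 0))).isSymmSndFDerivAt (by norm_num)
  set A' := fderiv ℝ (fderiv ℝ T) (q, 0) ((0 : PS n r), (1:ℝ)) (v, (0:ℝ)) with hA'
  set B' := fderiv ℝ (fderiv ℝ X) (q, 0) ((0 : PS n r), (1:ℝ)) (v, (0:ℝ)) with hB'
  have hAs : HasDerivAt (fun s => fderiv ℝ T (q, s) (v, (0:ℝ))) A' 0 :=
    aux_fderiv_apply_curve hT (hvert q 0) (v, (0:ℝ))
  have hBs : HasDerivAt (fun s => fderiv ℝ X (q, s) (v, (0:ℝ))) B' 0 :=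
    aux_fderiv_apply_curve hX (hvert q 0) (v, (0:ℝ))
  -- ȧ = A', ḃ = B'
  have hadot : deriv (fun τ => deriv (fun s => T ((τ, x τ, u τ), s)) 0) t = A' := by
    have h2 : (fun τ => deriv (fun s => T ((τ, x τ, u τ), s)) 0)
        = fun τ => fderiv ℝ T (((τ, x τ, u τ) : PS n r), 0) ((0 : PS n r), (1:ℝ)) := by
      funext τ
      exact (aux_comp_curve hTd (hvert ((τ, x τ, u τ) : PS n r) 0)).deriv
    rw [h2]
    have h3 := (aux_fderiv_apply_curve hT (hhor 0 t ht) ((0 : PS n r), (1:ℝ))).deriv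
    rw [h3, hA']
    exact hsymT (v, (0:ℝ)) ((0 : PS n r), (1:ℝ))
  have hbdot : deriv (fun τ => deriv (fun s => X ((τ, x τ, u τ), s)) 0) t = B' := by
    have h2 : (fun τ => deriv (fun s => X ((τ, x τ, u τ), s)) 0)
        = fun τ => fderiv ℝ X (((τ, x τ, u τ) : PS n r), 0) ((0 : PS n r), (1:ℝ)) := by
      funext τ
      exact (aux_comp_curve hXd (hvert ((τ, x τ, u τ) : PS n r) 0)).deriv
    rw [h2]
    have h3 := (aux_fderiv_apply_curve hX (hhor 0 t ht) ((0 : PS n r), (1:ℝ))).deriv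
    rw [h3, hB']
    exact hsymX (v, (0:ℝ)) ((0 : PS n r), (1:ℝ))
  -- the family curve H : s ↦ (T,X,U)((q),s)
  have hH : HasDerivAt (fun s => ((T (q, s), X (q, s), U (q, s)) : PS n r))
      (a₀, b₀, c₀) 0 := haA.prodMk (haB.prodMk haC)
  have hH0 : ((T (q, 0), X (q, 0), U (q, 0)) : PS n r) = q := by
    rw [hT0 q, hX0 q, hU0 q]
  have hmem : Ioo (-ε) ε ∈ nhds (0:ℝ) := isOpen_Ioo.mem_nhds ⟨by linarith, hε⟩
  have htriple : ((a₀, b₀, c₀) : PS n r)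
      = ((a₀, 0, 0) : PS n r) + ((0, b₀, 0) : PS n r) + ((0, 0, c₀) : PS n r) := by
    simp [Prod.ext_iff]
  -- composed maps along H
  have hLH : HasDerivAt (fun s => L (T (q, s), X (q, s), U (q, s)))
      (fderiv ℝ L q ((a₀, b₀, c₀) : PS n r)) 0 := by
    have := ((hL.differentiable one_ne_zero _).hasFDerivAt.comp_hasDerivAt 0 hH)
    rwa [hH0] at this
  have hφH : HasDerivAt (fun s => φ (T (q, s), X (q, s), U (q, s)))
      (fderiv ℝ φ q ((a₀, b₀, c₀) : PS n r)) 0 := by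
    have := ((hφ.differentiable one_ne_zero _).hasFDerivAt.comp_hasDerivAt 0 hH)
    rwa [hH0] at this
  have hϕH : HasDerivAt (fun s => ϕ (T (q, s), X (q, s), U (q, s)))
      (fderiv ℝ ϕ q ((a₀, b₀, c₀) : PS n r)) 0 := by
    have := ((hϕ.differentiable one_ne_zero _).hasFDerivAt.comp_hasDerivAt 0 hH)
    rwa [hH0] at this
  -- ===== identity from hinvL =====
  have hEL : fderiv ℝ L q ((a₀, b₀, c₀) : PS n r) + L q * A' = 0 := by
    have hprod : HasDerivAt
        (fun s => L (T (q, s), X (q, s), U (q, s)) * fderiv ℝ T (q, s) (v, (0:ℝ)))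
        (fderiv ℝ L q ((a₀, b₀, c₀) : PS n r) * fderiv ℝ T (q, 0) (v, (0:ℝ))
          + L (T (q, 0), X (q, 0), U (q, 0)) * A') 0 := hLH.mul hAs
    rw [hH0, hA01, mul_one] at hprod
    have hconst : (fun s => L (T (q, s), X (q, s), U (q, s)) * fderiv ℝ T (q, s) (v, (0:ℝ)))
        =ᶠ[nhds (0:ℝ)] fun _ => L q := by
      filter_upwards [hmem] with s hs
      have h1 := hinvL s hs t ht
      rw [hderivT s] at h1
      exact h1.symm
    have := hprod.deriv
    rw [hconst.deriv_eq, deriv_const] at this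
    linarith [this]
  -- ===== identity from hinvϕ =====
  have hEϕ : fderiv ℝ ϕ q ((a₀, b₀, c₀) : PS n r) + A' • ϕ q = 0 := by
    have hprod : HasDerivAt
        (fun s => fderiv ℝ T (q, s) (v, (0:ℝ)) • ϕ (T (q, s), X (q, s), U (q, s)))
        (fderiv ℝ T (q, 0) (v, (0:ℝ)) • fderiv ℝ ϕ q ((a₀, b₀, c₀) : PS n r)
          + A' • ϕ (T (q, 0), X (q, 0), U (q, 0))) 0 := hAs.smul hϕH
    rw [hH0, hA01, one_smul] at hprod
    have hconst : (fun s => fderiv ℝ T (q, s) (v, (0:ℝ)) •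
        ϕ (T (q, s), X (q, s), U (q, s))) =ᶠ[nhds (0:ℝ)] fun _ => ϕ q := by
      filter_upwards [hmem] with s hs
      have h1 := hinvϕ s hs t ht
      rw [hderivT s] at h1
      exact h1.symm
    have h2 := hprod.deriv
    rw [hconst.deriv_eq, deriv_const] at h2
    exact h2.symm
  -- ===== identity from hinvφ =====
  have hEφ : B' = fderiv ℝ φ q ((a₀, b₀, c₀) : PS n r) + A' • φ q := by
    have hprod : HasDerivAt
        (fun s => fderiv ℝ T (q, s) (v, (0:ℝ)) • φ (T (q, s), X (q, s), U (q, s)))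
        (fderiv ℝ T (q, 0) (v, (0:ℝ)) • fderiv ℝ φ q ((a₀, b₀, c₀) : PS n r)
          + A' • φ (T (q, 0), X (q, 0), U (q, 0))) 0 := hAs.smul hφH
    rw [hH0, hA01, one_smul] at hprod
    have hconst : (fun s => fderiv ℝ X (q, s) (v, (0:ℝ)))
        =ᶠ[nhds (0:ℝ)] fun s => fderiv ℝ T (q, s) (v, (0:ℝ)) •
          φ (T (q, s), X (q, s), U (q, s)) := by
      filter_upwards [hmem] with s hs
      have h1 := hinvφ s hs t ht
      rw [hderivT s, hderivX s] at h1
      exact h1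
    have h2 := hBs.deriv
    rw [hconst.deriv_eq, hprod.deriv] at h2
    exact h2.symm
  -- ===== assemble =====
  rw [hda, hdb, hdc, hadot, hbdot]
  have e1 : fderiv ℝ L q ((a₀, 0, 0) : PS n r) + fderiv ℝ L q ((0, b₀, 0) : PS n r)
      + fderiv ℝ L q ((0, 0, c₀) : PS n r) + L q * A' = 0 := by
    have h := hEL; rw [htriple, map_add, map_add] at h; exact h
  have e2 : fderiv ℝ φ q ((a₀, 0, 0) : PS n r) + fderiv ℝ φ q ((0, b₀, 0) : PS n r)
      + fderiv ℝ φ q ((0, 0, c₀) : PS n r) + A' • φ q - B' = 0 := by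
    have h := hEφ; rw [htriple, map_add, map_add] at h; rw [h]; abel
  have e3 : fderiv ℝ ϕ q ((a₀, 0, 0) : PS n r) + fderiv ℝ ϕ q ((0, b₀, 0) : PS n r)
      + fderiv ℝ ϕ q ((0, 0, c₀) : PS n r) + A' • ϕ q = 0 := by
    have h := hEϕ; rw [htriple, map_add, map_add] at h; exact h
  rw [e1, e2, e3]
  simp
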